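/- arXiv:2211.00351 — 4 statements merged into one kernel-verified Lean document; each statement's English description precedes it below -/
import Mathlib

section
/- Let (a_n) be a sequence of positive reals such that a_n / a_{n+1} tends to 0 as n tends to infinity. Then for every κ ≥ 0, the sequence b_n = a_{2n} / (a_n² · n^κ) is unbounded. -/
open Filter

/-- If `(a n)` is a sequence of positive reals with `a n / a (n+1) → 0`, then for every
`κ ≥ 0` the sequence `b n = a (2n) / (a n ^ 2 * n ^ κ)` (for `n ≥ 1`) is unbounded. -/
theorem stmt0 (a : ℕ → ℝ) (ha : ∀ n, 0 < a n)
    (hlim : Tendsto (fun n => a n / a (n + 1)) atTop (nhds 0))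
    (κ : ℝ) (hκ : 0 ≤ κ) :
    ∀ K : ℝ, ∃ n : ℕ, 1 ≤ n ∧ K < a (2 * n) / ((a n) ^ 2 * (n : ℝ) ^ κ) := by
  intro K
  by_contra hcon
  push_neg at hcon
  set K' : ℝ := max K 1 with hK'
  have hK1 : (1:ℝ) ≤ K' := le_max_right _ _
  have hK0 : (0:ℝ) < K' := lt_of_lt_of_le one_pos hK1
  set c : ℕ := ⌈κ⌉₊ with hc
  -- step 1: polynomial-exponent upper bound with natural exponent
  have hbound : ∀ n : ℕ, 1 ≤ n → a (2*n) ≤ K' * a n ^ 2 * (n:ℝ)^c := by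
    intro n hn
    have hn1 : (1:ℝ) ≤ (n:ℝ) := by exact_mod_cast hn
    have hpos : 0 < a n ^ 2 * (n:ℝ)^κ := by
      have := ha n
      positivity
    have h1 : a (2*n) ≤ K * (a n ^ 2 * (n:ℝ)^κ) := by
      have := hcon n hn
      rwa [div_le_iff₀ hpos] at this
    have h2 : (n:ℝ)^κ ≤ (n:ℝ)^(c:ℕ) := by
      rw [← Real.rpow_natCast (n:ℝ) c]
      exact Real.rpow_le_rpow_of_exponent_le hn1 (Nat.le_ceil κ)
    have h3 : (0:ℝ) < a n ^ 2 := by have := ha n; positivity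
    calc a (2*n) ≤ K * (a n ^ 2 * (n:ℝ)^κ) := h1
      _ ≤ K' * (a n ^ 2 * (n:ℝ)^(c:ℕ)) := by
          apply mul_le_mul (le_max_left _ _) ?_ (le_of_lt hpos) (le_of_lt hK0)
          exact mul_le_mul_of_nonneg_left h2 (le_of_lt h3)
      _ = K' * a n ^ 2 * (n:ℝ)^(c:ℕ) := by ring
  -- step 2: doubly exponential upper bound along powers of 2
  set L : ℝ := max 1 (a 1 * K' * 2^c) with hL
  have hL1 : (1:ℝ) ≤ L := le_max_left _ _
  have hL0 : (0:ℝ) < L := lt_of_lt_of_le one_pos hL1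
  have key : ∀ j : ℕ, a (2^j) * K' * ((2:ℝ)^(j+1))^c ≤ L^(2^j) := by
    intro j
    induction j with
    | zero =>
      simp only [pow_zero, pow_one, zero_add]
      exact le_max_right (1:ℝ) (a 1 * K' * 2^c)
    | succ j ih =>
      have hpow1 : (1:ℕ) ≤ 2^j := Nat.one_le_two_pow
      have h1 : a (2^(j+1)) ≤ K' * a (2^j) ^ 2 * ((2:ℝ)^j)^c := by
        have h := hbound (2^j) hpow1
        have e1 : 2 * 2^j = 2^(j+1) := by ring
        rw [e1] at h
        have e2 : ((2^j : ℕ):ℝ) = (2:ℝ)^j := by push_cast; ring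
        rwa [e2] at h
      have hpos1 : (0:ℝ) < K' * ((2:ℝ)^(j+2))^c := by positivity
      have step1 : a (2^(j+1)) * K' * ((2:ℝ)^(j+2))^c
          ≤ (K' * a (2^j) ^ 2 * ((2:ℝ)^j)^c) * K' * ((2:ℝ)^(j+2))^c := by
        have := mul_le_mul_of_nonneg_right h1 (le_of_lt hpos1)
        calc a (2^(j+1)) * K' * ((2:ℝ)^(j+2))^c
            = a (2^(j+1)) * (K' * ((2:ℝ)^(j+2))^c) := by ring
          _ ≤ (K' * a (2^j) ^ 2 * ((2:ℝ)^j)^c) * (K' * ((2:ℝ)^(j+2))^c) := this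
          _ = (K' * a (2^j) ^ 2 * ((2:ℝ)^j)^c) * K' * ((2:ℝ)^(j+2))^c := by ring
      have step2 : (K' * a (2^j) ^ 2 * ((2:ℝ)^j)^c) * K' * ((2:ℝ)^(j+2))^c
          = (a (2^j) * K' * ((2:ℝ)^(j+1))^c)^2 := by
        have e : ((2:ℝ)^j)^c * ((2:ℝ)^(j+2))^c = (((2:ℝ)^(j+1))^c)^2 := by
          simp only [← pow_mul, ← pow_add]
          congr 1
          ring
        calc (K' * a (2^j) ^ 2 * ((2:ℝ)^j)^c) * K' * ((2:ℝ)^(j+2))^c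
            = (a (2^j))^2 * K'^2 * (((2:ℝ)^j)^c * ((2:ℝ)^(j+2))^c) := by ring
          _ = (a (2^j))^2 * K'^2 * (((2:ℝ)^(j+1))^c)^2 := by rw [e]
          _ = (a (2^j) * K' * ((2:ℝ)^(j+1))^c)^2 := by ring
      have h4 : (a (2^j) * K' * ((2:ℝ)^(j+1))^c)^2 ≤ (L^(2^j))^2 := by
        apply pow_le_pow_left₀ _ ih
        have := ha (2^j)
        positivity
      have h5 : (L^(2^j))^2 = L^(2^(j+1)) := by
        rw [← pow_mul, pow_succ]
      calc a (2^(j+1)) * K' * ((2:ℝ)^(j+1+1))^c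
          ≤ (K' * a (2^j) ^ 2 * ((2:ℝ)^j)^c) * K' * ((2:ℝ)^(j+2))^c := step1
        _ = (a (2^j) * K' * ((2:ℝ)^(j+1))^c)^2 := step2
        _ ≤ (L^(2^j))^2 := h4
        _ = L^(2^(j+1)) := h5
  have hA : ∀ j : ℕ, a (2^j) ≤ L^(2^j) := by
    intro j
    have h1 : (1:ℝ) ≤ K' * ((2:ℝ)^(j+1))^c := by
      have : (1:ℝ) ≤ ((2:ℝ)^(j+1))^c := one_le_pow₀ (one_le_pow₀ one_le_two)
      calc (1:ℝ) = 1 * 1 := by ring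
        _ ≤ K' * ((2:ℝ)^(j+1))^c := mul_le_mul hK1 this zero_le_one (le_of_lt hK0)
    calc a (2^j) = a (2^j) * 1 := by ring
      _ ≤ a (2^j) * (K' * ((2:ℝ)^(j+1))^c) := by
          exact mul_le_mul_of_nonneg_left h1 (le_of_lt (ha _))
      _ = a (2^j) * K' * ((2:ℝ)^(j+1))^c := by ring
      _ ≤ L^(2^j) := key j
  -- step 3: eventually geometric lower bound with ratio R = 2 * L^2
  set R : ℝ := 2 * L^2 with hR
  have hR1 : (1:ℝ) ≤ R := by nlinarith
  have hR0 : (0:ℝ) < R := lt_of_lt_of_le one_pos hR1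
  obtain ⟨N₁, hN₁⟩ := eventually_atTop.mp
    (hlim.eventually_lt_const (show (0:ℝ) < 1/R by positivity))
  have hstep : ∀ n, N₁ ≤ n → R * a n < a (n+1) := by
    intro n hn
    have h := hN₁ n hn
    rw [div_lt_div_iff₀ (ha (n+1)) hR0] at h
    linarith
  have hchain : ∀ n, N₁ ≤ n → ∀ m : ℕ, R^m * a n ≤ a (n + m) := by
    intro n hn m
    induction m with
    | zero => simp
    | succ m ih =>
      have h1 : R * (R^m * a n) ≤ R * a (n + m) :=
        mul_le_mul_of_nonneg_left ih (le_of_lt hR0)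
      have h2 : R * a (n + m) < a (n + m + 1) := hstep (n+m) (le_trans hn (Nat.le_add_right _ _))
      calc R^(m+1) * a n = R * (R^m * a n) := by ring
        _ ≤ R * a (n+m) := h1
        _ ≤ a (n + (m+1)) := by rw [← Nat.add_assoc]; linarith
  have hmono : ∀ m : ℕ, a N₁ ≤ a (N₁ + m) := by
    intro m
    have h := hchain N₁ le_rfl m
    have h1 : a N₁ ≤ R^m * a N₁ := by
      have : (1:ℝ) ≤ R^m := one_le_pow₀ hR1
      nlinarith [ha N₁]
    linarith
  -- step 4: derive the contradiction
  obtain ⟨m, hm⟩ := pow_unbounded_of_one_lt (1 / a N₁) (one_lt_two (α := ℝ))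
  set j := max m N₁ with hj
  have hjN : N₁ ≤ 2^j := le_trans (le_max_right m N₁) (Nat.le_of_lt (Nat.lt_two_pow_self (n := j)))
  have hup : a (2^(j+1)) ≤ (L^2)^(2^j) := by
    calc a (2^(j+1)) ≤ L^(2^(j+1)) := hA (j+1)
      _ = (L^2)^(2^j) := by rw [show (2:ℕ)^(j+1) = 2*2^j from by ring, pow_mul]
  have hlow : R^(2^j) * a N₁ ≤ a (2^(j+1)) := by
    have h1 : a N₁ ≤ a (2^j) := by
      have := hmono (2^j - N₁)
      rwa [Nat.add_sub_cancel' hjN] at this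
    have h2 : R^(2^j) * a (2^j) ≤ a (2^j + 2^j) := hchain (2^j) hjN (2^j)
    have h3 : 2^j + 2^j = 2^(j+1) := by ring
    rw [h3] at h2
    have h4 : R^(2^j) * a N₁ ≤ R^(2^j) * a (2^j) :=
      mul_le_mul_of_nonneg_left h1 (by positivity)
    linarith
  have hcontra : (2:ℝ)^(2^j) * a N₁ ≤ 1 := by
    have h1 : R^(2^j) = (2:ℝ)^(2^j) * (L^2)^(2^j) := by
      rw [hR, mul_pow]
    have h2 : (2:ℝ)^(2^j) * (L^2)^(2^j) * a N₁ ≤ (L^2)^(2^j) := by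
      rw [← h1]; linarith
    have h3 : (0:ℝ) < (L^2)^(2^j) := by positivity
    have h4 : ((2:ℝ)^(2^j) * a N₁) * (L^2)^(2^j) ≤ 1 * (L^2)^(2^j) := by
      rw [one_mul]; linarith
    exact (mul_le_mul_iff_of_pos_right h3).mp h4
  have hbig : (1:ℝ) < (2:ℝ)^(2^j) * a N₁ := by
    have h1 : (2:ℝ)^m ≤ (2:ℝ)^(2^j) := by
      apply pow_le_pow_right₀ one_le_two
      calc m ≤ j := le_max_left m N₁
        _ ≤ 2^j := Nat.le_of_lt (Nat.lt_two_pow_self (n := j))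
    have h2 : 1 / a N₁ < (2:ℝ)^(2^j) := lt_of_lt_of_le hm h1
    have h3 := ha N₁
    rw [div_lt_iff₀ h3] at h2
    linarith [mul_comm ((2:ℝ)^(2^j)) (a N₁)]
  linarith
end

section
/- For M ≥ 1, m ≤ M natural numbers, ρ > 0, x > 0 and y ≥ 0, the integral A(M, m, ρ, x, y) = ∫_{(ℝ_{≥0})^M} (∏_{i=1}^M s_i^{x−1} ds_i) · 1[∑_{i=1}^M s_i ≤ ρ] · (ρ − ∑_{j=1}^m s_j)^y equals ρ^{Mx+y} · Γ(x)^M · Γ((M−m)x + y + 1) / (Γ(Mx + y + 1) · Γ((M−m)x + 1)). -/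
open MeasureTheory Real

open Set

lemma betaIntegrable_left {p q ρ : ℝ} (hp : 0 < p) (hρ : 0 < ρ) :
    IntervalIntegrable (fun t => t ^ (p - 1) * (ρ - t) ^ (q - 1)) volume 0 (ρ / 2) := by
  apply IntervalIntegrable.mul_continuousOn
  · exact intervalIntegral.intervalIntegrable_rpow' (by linarith)
  · apply ContinuousOn.rpow_const (by fun_prop)
    intro t ht
    rw [uIcc_of_le (by positivity : (0:ℝ) ≤ ρ/2)] at ht
    left; intro h; nlinarith [ht.2]

lemma betaIntegrable {a b ρ : ℝ} (ha : 0 < a) (hb : 0 < b) (hρ : 0 < ρ) :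
    IntervalIntegrable (fun t => t ^ (a - 1) * (ρ - t) ^ (b - 1)) volume 0 ρ := by
  refine (betaIntegrable_left ha hρ).trans ?_
  have h := ((betaIntegrable_left (q := a) hb hρ).comp_sub_left ρ)
  have : (fun t => t ^ (a - 1) * (ρ - t) ^ (b - 1)) =
      fun x => (ρ - x) ^ (b - 1) * (ρ - (ρ - x)) ^ (a - 1) := by
    ext x; rw [mul_comm]; congr 2; ring
  rw [this]
  rw [show ρ - 0 = ρ by ring, show ρ - ρ/2 = ρ/2 by ring] at h
  exact h.symm

lemma betaValue {a b ρ : ℝ} (ha : 0 < a) (hb : 0 < b) (hρ : 0 < ρ) :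
    ∫ t in (0:ℝ)..ρ, t ^ (a - 1) * (ρ - t) ^ (b - 1) =
      ρ ^ (a + b - 1) * (Real.Gamma a * Real.Gamma b / Real.Gamma (a + b)) := by
  have hG : Complex.Gamma ((a:ℂ) + (b:ℂ)) ≠ 0 := by
    rw [← Complex.ofReal_add, Complex.Gamma_ofReal]
    exact_mod_cast (Real.Gamma_pos_of_pos (by positivity)).ne'
  have h2 := Complex.Gamma_mul_Gamma_eq_betaIntegral (s := (a:ℂ)) (t := (b:ℂ))
    (by simpa using ha) (by simpa using hb)
  have hbeta : Complex.betaIntegral a b =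
      Complex.Gamma a * Complex.Gamma b / Complex.Gamma ((a:ℂ) + (b:ℂ)) := by
    rw [eq_div_iff hG, mul_comm, ← h2]
  have h1 := Complex.betaIntegral_scaled (a:ℂ) (b:ℂ) hρ
  rw [hbeta] at h1
  have h3 : ∫ x in (0:ℝ)..ρ, (x:ℂ) ^ ((a:ℂ) - 1) * ((ρ:ℂ) - x) ^ ((b:ℂ) - 1)
      = ((∫ t in (0:ℝ)..ρ, t ^ (a - 1) * (ρ - t) ^ (b - 1) : ℝ) : ℂ) := by
    rw [← intervalIntegral.integral_ofReal]
    apply intervalIntegral.integral_congr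
    intro x hx
    rw [uIcc_of_le hρ.le] at hx
    dsimp only
    rw [show ((a:ℂ) - 1) = ((a - 1 : ℝ):ℂ) by push_cast; ring,
      show ((b:ℂ) - 1) = ((b - 1 : ℝ):ℂ) by push_cast; ring,
      show ((ρ:ℂ) - (x:ℂ)) = ((ρ - x : ℝ):ℂ) by push_cast; ring,
      ← Complex.ofReal_cpow hx.1, ← Complex.ofReal_cpow (by linarith [hx.2] : (0:ℝ) ≤ ρ - x),
      ← Complex.ofReal_mul]
  rw [h3] at h1
  have h4 : ((ρ:ℂ)) ^ ((a:ℂ) + (b:ℂ) - 1) = ((ρ ^ (a + b - 1) : ℝ) : ℂ) := by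
    rw [show ((a:ℂ) + (b:ℂ) - 1) = ((a + b - 1 : ℝ):ℂ) by push_cast; ring,
      ← Complex.ofReal_cpow hρ.le]
  rw [h4, Complex.Gamma_ofReal, Complex.Gamma_ofReal, ← Complex.ofReal_add,
    Complex.Gamma_ofReal] at h1
  exact_mod_cast h1
lemma betaLintegral {a b ρ : ℝ} (ha : 0 < a) (hb : 0 < b) (hρ : 0 < ρ) :
    ∫⁻ t in Set.Ioo 0 ρ, ENNReal.ofReal (t ^ (a - 1) * (ρ - t) ^ (b - 1)) =
      ENNReal.ofReal (ρ ^ (a + b - 1) * (Real.Gamma a * Real.Gamma b / Real.Gamma (a + b))) := by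
  have hInt : IntegrableOn (fun t => t ^ (a - 1) * (ρ - t) ^ (b - 1)) (Set.Ioo 0 ρ) :=
    (((intervalIntegrable_iff_integrableOn_Ioc_of_le hρ.le).1
      (betaIntegrable ha hb hρ))).mono_set Set.Ioo_subset_Ioc_self
  have hnn : 0 ≤ᵐ[volume.restrict (Set.Ioo 0 ρ)]
      (fun t => t ^ (a - 1) * (ρ - t) ^ (b - 1)) := by
    refine (ae_restrict_iff' measurableSet_Ioo).2 (ae_of_all _ fun t ht => ?_)
    exact mul_nonneg (Real.rpow_nonneg ht.1.le _)
      (Real.rpow_nonneg (by linarith [ht.2] : (0:ℝ) ≤ ρ - t) _)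
  rw [← ofReal_integral_eq_lintegral_ofReal hInt hnn, ← integral_Ioc_eq_integral_Ioo,
    ← intervalIntegral.integral_of_le hρ.le, betaValue ha hb hρ]

lemma measS (M : ℕ) (ρ : ℝ) :
    MeasurableSet {s : Fin M → ℝ | (∀ i, 0 ≤ s i) ∧ ∑ i, s i ≤ ρ} := by
  have : {s : Fin M → ℝ | (∀ i, 0 ≤ s i) ∧ ∑ i, s i ≤ ρ} =
      (⋂ i, {s : Fin M → ℝ | 0 ≤ s i}) ∩ {s | ∑ i, s i ≤ ρ} := by
    ext s; simp [Set.mem_iInter]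
  rw [this]
  refine MeasurableSet.inter (MeasurableSet.iInter fun i =>
    measurableSet_le measurable_const (measurable_pi_apply i)) ?_
  exact measurableSet_le (Finset.measurable_sum _ fun i _ => measurable_pi_apply i)
    measurable_const

lemma measF (M m : ℕ) (ρ x y : ℝ) :
    Measurable fun s : Fin M → ℝ => (∏ i, (s i) ^ (x - 1)) *
      (ρ - ∑ j ∈ Finset.univ.filter (fun j : Fin M => (j : ℕ) < m), s j) ^ y := by
  fun_prop
lemma dirichlet_lintegral (x : ℝ) (hx : 0 < x) :
    ∀ (M : ℕ) (m : ℕ), m ≤ M → ∀ ρ : ℝ, 0 < ρ → ∀ y : ℝ, 0 ≤ y →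
    (∫⁻ s : Fin M → ℝ in {s : Fin M → ℝ | (∀ i, 0 ≤ s i) ∧ ∑ i, s i ≤ ρ},
        ENNReal.ofReal ((∏ i, (s i) ^ (x - 1)) *
          (ρ - ∑ j ∈ Finset.univ.filter (fun j : Fin M => (j : ℕ) < m), s j) ^ y))
      = ENNReal.ofReal (ρ ^ ((M : ℝ) * x + y) * (Real.Gamma x) ^ M *
          Real.Gamma (((M : ℝ) - (m : ℝ)) * x + y + 1) /
        (Real.Gamma ((M : ℝ) * x + y + 1) * Real.Gamma (((M : ℝ) - (m : ℝ)) * x + 1))) := by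
  intro M
  induction M with
  | zero =>
    intro m hm ρ hρ y hy
    interval_cases m
    have hset : {s : Fin 0 → ℝ | (∀ i, 0 ≤ s i) ∧ ∑ i, s i ≤ ρ} = Set.univ := by
      refine Set.eq_univ_of_forall fun s => ⟨fun i => i.elim0, by simp [hρ.le]⟩
    rw [hset, Measure.restrict_univ]
    simp only [Finset.univ_eq_empty, Finset.prod_empty, Finset.filter_empty, Finset.sum_empty,
      sub_zero, one_mul]
    rw [lintegral_const]
    have hvol : (volume : Measure (Fin 0 → ℝ)) Set.univ = 1 := by
      rw [MeasureTheory.volume_pi, MeasureTheory.Measure.pi_univ]; simp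
    rw [hvol, mul_one]
    congr 1
    have h1 : Real.Gamma ((0:ℝ) * x + y + 1) = Real.Gamma (y + 1) := by norm_num
    have h2 : Real.Gamma (((0:ℝ) - 0) * x + y + 1) = Real.Gamma (y + 1) := by norm_num
    have h3 : Real.Gamma (((0:ℝ) - 0) * x + 1) = 1 := by
      norm_num [Real.Gamma_one]
    push_cast
    rw [h1, h2, h3]
    have hG : Real.Gamma (y + 1) ≠ 0 := (Real.Gamma_pos_of_pos (by linarith)).ne'
    field_simp
    norm_num
  | succ M IH =>
    intro m hm ρ hρ y hy
    -- main step for m = k+1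
    have hpos : ∀ k : ℕ, k ≤ M → ∀ ρ : ℝ, 0 < ρ → ∀ y : ℝ, 0 ≤ y →
        (∫⁻ s : Fin (M+1) → ℝ in {s : Fin (M+1) → ℝ | (∀ i, 0 ≤ s i) ∧ ∑ i, s i ≤ ρ},
            ENNReal.ofReal ((∏ i, (s i) ^ (x - 1)) *
              (ρ - ∑ j ∈ Finset.univ.filter (fun j : Fin (M+1) => (j : ℕ) < k+1), s j) ^ y))
          = ENNReal.ofReal (ρ ^ (((M+1 : ℕ) : ℝ) * x + y) * (Real.Gamma x) ^ (M+1) *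
              Real.Gamma ((((M+1 : ℕ) : ℝ) - ((k+1 : ℕ) : ℝ)) * x + y + 1) /
            (Real.Gamma (((M+1 : ℕ) : ℝ) * x + y + 1) *
              Real.Gamma ((((M+1 : ℕ) : ℝ) - ((k+1 : ℕ) : ℝ)) * x + 1))) := by
      intro k hk ρ hρ y hy
      have hρ' : (0:ℝ) ≤ ρ := hρ.le
      set S := {s : Fin (M+1) → ℝ | (∀ i, 0 ≤ s i) ∧ ∑ i, s i ≤ ρ} with hS
      set f : (Fin (M+1) → ℝ) → ENNReal := fun s => ENNReal.ofReal ((∏ i, (s i) ^ (x - 1)) *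
          (ρ - ∑ j ∈ Finset.univ.filter (fun j : Fin (M+1) => (j : ℕ) < k+1), s j) ^ y) with hf
      have hfm : Measurable f := ENNReal.measurable_ofReal.comp (measF (M+1) (k+1) ρ x y)
      have hSm : MeasurableSet S := measS (M+1) ρ
      have hgm : Measurable (S.indicator f) := hfm.indicator hSm
      set e := MeasurableEquiv.piFinSuccAbove (fun _ : Fin (M+1) => ℝ) 0 with he
      have hmp := (MeasureTheory.volume_preserving_piFinSuccAbove (fun _ : Fin (M+1) => ℝ) 0).symm e
      show (∫⁻ s in S, f s) = _
      rw [← lintegral_indicator hSm, ← hmp.lintegral_comp hgm, MeasureTheory.Measure.volume_eq_prod,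
        MeasureTheory.lintegral_prod (fun a => S.indicator f (e.symm a))
          ((hgm.comp (MeasurableEquiv.measurable _)).aemeasurable)]
      have hcons : ∀ (t : ℝ) (u : Fin M → ℝ), e.symm (t, u) = Fin.cons t u := by
        intro t u
        simp [he, MeasurableEquiv.piFinSuccAbove_symm_apply, Fin.insertNth_zero', Fin.consEquiv]
      set K : ℝ := Real.Gamma x ^ M * Real.Gamma (((M:ℝ) - (k:ℝ)) * x + y + 1) /
          (Real.Gamma ((M:ℝ) * x + y + 1) * Real.Gamma (((M:ℝ) - (k:ℝ)) * x + 1)) with hK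
      have hxM : (0:ℝ) < (M:ℝ) * x + y + 1 := by positivity
      have hKnn : 0 ≤ K := by
        rw [hK]
        have h1 : (0:ℝ) < Real.Gamma ((M:ℝ) * x + y + 1) := Real.Gamma_pos_of_pos hxM
        have h2 : (0:ℝ) < Real.Gamma (((M:ℝ) - (k:ℝ)) * x + 1) := Real.Gamma_pos_of_pos (by
          have : (0:ℝ) ≤ ((M:ℝ) - (k:ℝ)) * x := by
            apply mul_nonneg _ hx.le
            have := hk
            have : (k:ℝ) ≤ (M:ℝ) := by exact_mod_cast hk
            linarith
          linarith)
        have h3 : (0:ℝ) ≤ Real.Gamma (((M:ℝ) - (k:ℝ)) * x + y + 1) := (Real.Gamma_pos_of_pos (by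
          have : (0:ℝ) ≤ ((M:ℝ) - (k:ℝ)) * x := by
            apply mul_nonneg _ hx.le
            have : (k:ℝ) ≤ (M:ℝ) := by exact_mod_cast hk
            linarith
          linarith)).le
        positivity
      have hMk : (0:ℝ) ≤ ((M:ℝ) - (k:ℝ)) * x := by
        apply mul_nonneg _ hx.le
        have : (k:ℝ) ≤ (M:ℝ) := by exact_mod_cast hk
        linarith
      have hmem : ∀ (t : ℝ) (u : Fin M → ℝ), (Fin.cons t u ∈ S) ↔
          ((0 ≤ t ∧ ∀ i, 0 ≤ u i) ∧ t + ∑ i, u i ≤ ρ) := by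
        intro t u
        simp only [hS, Set.mem_setOf_eq, Fin.forall_fin_succ, Fin.cons_zero, Fin.cons_succ,
          Fin.sum_cons]
      have hfs : ∀ (t : ℝ) (u : Fin M → ℝ),
          (∑ j ∈ Finset.univ.filter (fun j : Fin (M+1) => (j:ℕ) < k+1), Fin.cons t u j)
          = t + ∑ j ∈ Finset.univ.filter (fun j : Fin M => (j:ℕ) < k), u j := by
        intro t u
        rw [Finset.sum_filter, Finset.sum_filter, Fin.sum_univ_succ]
        simp [Fin.cons_zero, Fin.cons_succ, Fin.val_succ, Nat.succ_lt_succ_iff]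
      have hinner : ∀ t : ℝ, t ∉ ({0, ρ} : Set ℝ) →
          (∫⁻ u : Fin M → ℝ, S.indicator f (e.symm (t, u))) =
            (Set.Ioo 0 ρ).indicator (fun t => ENNReal.ofReal
              (t ^ (x-1) * (ρ - t) ^ ((M:ℝ)*x + y)) * ENNReal.ofReal K) t := by
        intro t ht
        simp only [hcons]
        rcases lt_or_ge t 0 with htneg | ht0
        · have hz : ∀ u : Fin M → ℝ, S.indicator f (Fin.cons t u) = 0 := by
            intro u
            apply Set.indicator_of_notMem
            rw [hmem]
            rintro ⟨⟨h1, _⟩, _⟩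
            linarith
          simp only [hz, lintegral_zero]
          rw [Set.indicator_of_notMem (by
            intro hmem2
            exact absurd hmem2.1 (not_lt.mpr htneg.le))]
        rcases lt_or_ge ρ t with htgt | htρ
        · have hz : ∀ u : Fin M → ℝ, S.indicator f (Fin.cons t u) = 0 := by
            intro u
            apply Set.indicator_of_notMem
            rw [hmem]
            rintro ⟨⟨h1, hu⟩, hsum⟩
            have : (0:ℝ) ≤ ∑ i, u i := Finset.sum_nonneg fun i _ => hu i
            linarith
          simp only [hz, lintegral_zero]
          rw [Set.indicator_of_notMem (by
            intro hmem2
            exact absurd hmem2.2 (not_lt.mpr htgt.le))]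
        -- now 0 ≤ t ≤ ρ and t ∉ {0, ρ}, so 0 < t < ρ
        have ht0' : t ≠ 0 := fun h => ht (by simp [h])
        have htρ' : t ≠ ρ := fun h => ht (by simp [h])
        have htpos : 0 < t := lt_of_le_of_ne ht0 (Ne.symm ht0')
        have htlt : t < ρ := lt_of_le_of_ne htρ htρ'
        have hIoo : t ∈ Set.Ioo (0:ℝ) ρ := ⟨htpos, htlt⟩
        have hρt : (0:ℝ) < ρ - t := by linarith
        set S' := {u : Fin M → ℝ | (∀ i, 0 ≤ u i) ∧ ∑ i, u i ≤ ρ - t} with hS'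
        have hSm' : MeasurableSet S' := measS M (ρ - t)
        set g : (Fin M → ℝ) → ENNReal := fun u => ENNReal.ofReal ((∏ i, (u i) ^ (x - 1)) *
            ((ρ - t) - ∑ j ∈ Finset.univ.filter (fun j : Fin M => (j : ℕ) < k), u j) ^ y)
          with hg
        have hgm' : Measurable g := ENNReal.measurable_ofReal.comp (measF M k (ρ - t) x y)
        have hptwise : ∀ u : Fin M → ℝ, S.indicator f (Fin.cons t u) =
            S'.indicator (fun u => ENNReal.ofReal (t ^ (x-1)) * g u) u := by
          intro u
          by_cases hu : u ∈ S'
          · rw [Set.indicator_of_mem hu, Set.indicator_of_mem (by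
              rw [hmem]
              exact ⟨⟨htpos.le, hu.1⟩, by linarith [hu.2]⟩)]
            rw [hf, hg]
            dsimp only
            rw [Fin.prod_univ_succ]
            simp only [Fin.cons_zero, Fin.cons_succ]
            rw [hfs]
            rw [show ρ - (t + ∑ j ∈ Finset.univ.filter (fun j : Fin M => (j:ℕ) < k), u j)
              = (ρ - t) - ∑ j ∈ Finset.univ.filter (fun j : Fin M => (j:ℕ) < k), u j by ring]
            rw [mul_assoc, ENNReal.ofReal_mul (Real.rpow_nonneg htpos.le _)]
          · rw [Set.indicator_of_notMem hu, Set.indicator_of_notMem (by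
              rw [hmem]
              rintro ⟨⟨h1, hu1⟩, hsum⟩
              exact hu ⟨hu1, by linarith⟩)]
        simp only [hptwise]
        rw [lintegral_indicator hSm', lintegral_const_mul _ hgm']
        have hIH := IH k hk (ρ - t) hρt y hy
        rw [hIH]
        rw [Set.indicator_of_mem hIoo]
        rw [show (ρ - t) ^ ((M:ℝ) * x + y) * Real.Gamma x ^ M *
              Real.Gamma (((M:ℝ) - (k:ℝ)) * x + y + 1) /
            (Real.Gamma ((M:ℝ) * x + y + 1) * Real.Gamma (((M:ℝ) - (k:ℝ)) * x + 1))
            = (ρ - t) ^ ((M:ℝ) * x + y) * K by rw [hK]; ring]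
        rw [ENNReal.ofReal_mul (Real.rpow_nonneg hρt.le _), ← mul_assoc,
          ← ENNReal.ofReal_mul (Real.rpow_nonneg htpos.le _)]
      have h0 : (volume : Measure ℝ) {0, ρ} = 0 := by
        rw [Set.insert_eq]
        exact measure_union_null Real.volume_singleton Real.volume_singleton
      rw [lintegral_congr_ae (Filter.eventuallyEq_of_mem (compl_mem_ae_iff.mpr h0) hinner)]
      rw [lintegral_indicator measurableSet_Ioo,
        lintegral_mul_const _ (by fun_prop : Measurable fun t : ℝ =>
          ENNReal.ofReal (t ^ (x-1) * (ρ - t) ^ ((M:ℝ)*x + y)))]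
      have hb : (0:ℝ) < (M:ℝ) * x + y + 1 := hxM
      have hbeta := betaLintegral hx hb hρ
      rw [show (fun t : ℝ => ENNReal.ofReal (t ^ (x-1) * (ρ - t) ^ ((M:ℝ)*x + y)))
          = fun t : ℝ => ENNReal.ofReal (t ^ (x-1) * (ρ - t) ^ (((M:ℝ)*x + y + 1) - 1)) by
        funext t; ring_nf]
      rw [hbeta, ← ENNReal.ofReal_mul (by positivity)]
      congr 1
      have hGB : Real.Gamma ((M:ℝ) * x + y + 1) ≠ 0 := (Real.Gamma_pos_of_pos hxM).ne'
      have hGC : Real.Gamma (x + ((M:ℝ) * x + y + 1)) ≠ 0 :=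
        (Real.Gamma_pos_of_pos (by positivity)).ne'
      have hGE : Real.Gamma (((M:ℝ) - (k:ℝ)) * x + 1) ≠ 0 :=
        (Real.Gamma_pos_of_pos (by linarith)).ne'
      rw [hK]
      push_cast
      rw [show x + ((M:ℝ) * x + y + 1) - 1 = ((M:ℝ) + 1) * x + y by ring,
        show ((M:ℝ) + 1) * x + y + 1 = x + ((M:ℝ) * x + y + 1) by ring,
        show ((M:ℝ) + 1 - ((k:ℝ) + 1)) * x + y + 1 = ((M:ℝ) - (k:ℝ)) * x + y + 1 by ring,
        show ((M:ℝ) + 1 - ((k:ℝ) + 1)) * x + 1 = ((M:ℝ) - (k:ℝ)) * x + 1 by ring]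
      field_simp
      ring
    match m, hm with
    | 0, _ =>
      have hfilter0 : Finset.univ.filter (fun j : Fin (M+1) => (j:ℕ) < 0) = ∅ := by simp
      have key := hpos M le_rfl ρ hρ 0 le_rfl
      have hpt : ∀ s : Fin (M+1) → ℝ,
          ENNReal.ofReal ((∏ i, (s i) ^ (x - 1)) *
            (ρ - ∑ j ∈ Finset.univ.filter (fun j : Fin (M+1) => (j:ℕ) < 0), s j) ^ y)
          = ENNReal.ofReal (ρ ^ y) * ENNReal.ofReal ((∏ i, (s i) ^ (x - 1)) *
            (ρ - ∑ j ∈ Finset.univ.filter (fun j : Fin (M+1) => (j:ℕ) < M+1), s j) ^ (0:ℝ)) := by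
        intro s
        rw [hfilter0]
        simp only [Finset.sum_empty, sub_zero, Real.rpow_zero, mul_one]
        rw [← ENNReal.ofReal_mul (Real.rpow_nonneg hρ.le _), mul_comm]
      simp only [hpt]
      rw [lintegral_const_mul _ (by fun_prop : Measurable fun s : Fin (M+1) → ℝ =>
          ENNReal.ofReal ((∏ i, (s i) ^ (x - 1)) *
            (ρ - ∑ j ∈ Finset.univ.filter (fun j : Fin (M+1) => (j:ℕ) < M+1), s j) ^ (0:ℝ))), key,
        ← ENNReal.ofReal_mul (Real.rpow_nonneg hρ.le _)]
      congr 1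
      push_cast
      rw [show ((M:ℝ) + 1 - ((M:ℝ) + 1)) * x + 0 + 1 = 1 by ring,
        show ((M:ℝ) + 1 - ((M:ℝ) + 1)) * x + 1 = 1 by ring,
        show ((M:ℝ) + 1) * x + 0 + 1 = ((M:ℝ) + 1) * x + 1 by ring,
        show ((M:ℝ) + 1) * x + 0 = ((M:ℝ) + 1) * x by ring,
        show ((M:ℝ) + 1 - 0) * x + y + 1 = ((M:ℝ) + 1) * x + y + 1 by ring,
        show ((M:ℝ) + 1 - 0) * x + 1 = ((M:ℝ) + 1) * x + 1 by ring,
        Real.Gamma_one, Real.rpow_add hρ]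
      have hG1 : Real.Gamma (((M:ℝ) + 1) * x + y + 1) ≠ 0 :=
        (Real.Gamma_pos_of_pos (by positivity)).ne'
      have hG2 : Real.Gamma (((M:ℝ) + 1) * x + 1) ≠ 0 :=
        (Real.Gamma_pos_of_pos (by positivity)).ne'
      field_simp
    | (k+1), hm =>
      exact hpos k (Nat.succ_le_succ_iff.mp hm) ρ hρ y hy

/-- The Dirichlet-type simplex integral
`A(M, m, ρ, x, y) = ∫_{s_i ≥ 0, ∑ s_i ≤ ρ} (∏ s_i^{x-1}) (ρ - ∑_{j<m} s_j)^y ds`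
equals `ρ^{Mx+y} Γ(x)^M Γ((M-m)x+y+1) / (Γ(Mx+y+1) Γ((M-m)x+1))`. -/
theorem stmt2 (M m : ℕ) (hM : 1 ≤ M) (hm : m ≤ M) (ρ x y : ℝ)
    (hρ : 0 < ρ) (hx : 0 < x) (hy : 0 ≤ y) :
    (∫ s : Fin M → ℝ in {s : Fin M → ℝ | (∀ i, 0 ≤ s i) ∧ ∑ i, s i ≤ ρ},
        (∏ i, (s i) ^ (x - 1)) *
          (ρ - ∑ j ∈ Finset.univ.filter (fun j : Fin M => (j : ℕ) < m), s j) ^ y)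
      = ρ ^ ((M : ℝ) * x + y) * (Real.Gamma x) ^ M *
          Real.Gamma (((M : ℝ) - (m : ℝ)) * x + y + 1) /
        (Real.Gamma ((M : ℝ) * x + y + 1) * Real.Gamma (((M : ℝ) - (m : ℝ)) * x + 1)) := by
  have hSm := measS M ρ
  have hmeas : AEStronglyMeasurable (fun s : Fin M → ℝ => (∏ i, (s i) ^ (x - 1)) *
      (ρ - ∑ j ∈ Finset.univ.filter (fun j : Fin M => (j : ℕ) < m), s j) ^ y)
      (volume.restrict {s : Fin M → ℝ | (∀ i, 0 ≤ s i) ∧ ∑ i, s i ≤ ρ}) :=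
    (measF M m ρ x y).aestronglyMeasurable
  have hnn : 0 ≤ᵐ[volume.restrict {s : Fin M → ℝ | (∀ i, 0 ≤ s i) ∧ ∑ i, s i ≤ ρ}]
      fun s : Fin M → ℝ => (∏ i, (s i) ^ (x - 1)) *
        (ρ - ∑ j ∈ Finset.univ.filter (fun j : Fin M => (j : ℕ) < m), s j) ^ y := by
    refine (ae_restrict_iff' hSm).2 (ae_of_all _ fun s hs => ?_)
    have h1 : (0:ℝ) ≤ ∏ i, (s i) ^ (x - 1) :=
      Finset.prod_nonneg fun i _ => Real.rpow_nonneg (hs.1 i) _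
    have h2 : ∑ j ∈ Finset.univ.filter (fun j : Fin M => (j : ℕ) < m), s j ≤ ∑ i, s i :=
      Finset.sum_le_sum_of_subset_of_nonneg (Finset.filter_subset _ _) fun i _ _ => hs.1 i
    exact mul_nonneg h1 (Real.rpow_nonneg (by linarith [hs.2]) _)
  rw [MeasureTheory.integral_eq_lintegral_of_nonneg_ae hnn hmeas,
    dirichlet_lintegral x hx M m hm ρ hρ y hy]
  have hMm : (0:ℝ) ≤ ((M:ℝ) - (m:ℝ)) * x := by
    apply mul_nonneg _ hx.le
    have : (m:ℝ) ≤ (M:ℝ) := by exact_mod_cast hm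
    linarith
  exact ENNReal.toReal_ofReal (div_nonneg
    (mul_nonneg (mul_nonneg (Real.rpow_nonneg hρ.le _)
      (pow_nonneg (Real.Gamma_pos_of_pos hx).le _))
      (Real.Gamma_pos_of_pos (by linarith)).le)
    (mul_nonneg (Real.Gamma_pos_of_pos (by positivity)).le
      (Real.Gamma_pos_of_pos (by linarith)).le))
end

section
/- The simplex integral satisfies the recursion A(M, m, 1, x, y) = B(x, (M−1)x + y + 1) · A(M−1, m−1, 1, x, y) for 1 ≤ m ≤ M, M ≥ 2, x > 0, y ≥ 0, where B denotes the Beta function. -/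
open MeasureTheory Real
open scoped ENNReal
noncomputable def simplexIntegral (M m : ℕ) (ρ x y : ℝ) : ℝ :=
  ∫ s : Fin M → ℝ in {s : Fin M → ℝ | (∀ i, 0 ≤ s i) ∧ ∑ i, s i ≤ ρ},
    (∏ i, (s i) ^ (x - 1)) *
      (ρ - ∑ j ∈ Finset.univ.filter (fun j : Fin M => (j : ℕ) < m), s j) ^ y

/-- The Beta function `B(a, b) = ∫_0^1 s^{a-1} (1-s)^{b-1} ds`. -/
noncomputable def betaFn (a b : ℝ) : ℝ :=
  ∫ s in (0 : ℝ)..1, s ^ (a - 1) * (1 - s) ^ (b - 1)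

noncomputable def Fe (n m : ℕ) (x y : ℝ) : (Fin n → ℝ) → ℝ≥0∞ :=
  Set.indicator {s : Fin n → ℝ | (∀ i, 0 ≤ s i) ∧ ∑ i, s i ≤ 1}
    (fun s => ENNReal.ofReal ((∏ i, (s i) ^ (x - 1)) *
      (1 - ∑ j ∈ Finset.univ.filter (fun j : Fin n => (j : ℕ) < m), s j) ^ y))

lemma measSet (n : ℕ) : MeasurableSet {s : Fin n → ℝ | (∀ i, 0 ≤ s i) ∧ ∑ i, s i ≤ 1} := by
  have : {s : Fin n → ℝ | (∀ i, 0 ≤ s i) ∧ ∑ i, s i ≤ 1}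
      = (⋂ i, {s : Fin n → ℝ | 0 ≤ s i}) ∩ {s : Fin n → ℝ | ∑ i, s i ≤ 1} := by
    ext s; simp [Set.mem_iInter]
  rw [this]
  exact (MeasurableSet.iInter fun i =>
      measurableSet_le measurable_const (measurable_pi_apply i)).inter
    (measurableSet_le (Finset.measurable_sum _ fun i _ => measurable_pi_apply i) measurable_const)

lemma measG (n m : ℕ) (x y : ℝ) : Measurable (fun s : Fin n → ℝ => (∏ i, (s i) ^ (x - 1)) *
      (1 - ∑ j ∈ Finset.univ.filter (fun j : Fin n => (j : ℕ) < m), s j) ^ y) := by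
  refine Measurable.mul ?_ ?_
  · exact Finset.measurable_prod _ fun i _ => (measurable_pi_apply i).pow measurable_const
  · exact ((measurable_const.sub
      (Finset.measurable_sum _ fun i _ => measurable_pi_apply i))).pow measurable_const

lemma measFe (n m : ℕ) (x y : ℝ) : Measurable (Fe n m x y) :=
  (ENNReal.measurable_ofReal.comp (measG n m x y)).indicator (measSet n)

lemma simplex_eq (n m : ℕ) (x y : ℝ) :
    simplexIntegral n m 1 x y = (∫⁻ s : Fin n → ℝ, Fe n m x y s).toReal := by
  rw [Fe, lintegral_indicator (measSet n), simplexIntegral]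
  rw [integral_eq_lintegral_of_nonneg_ae]
  · refine (ae_restrict_of_forall_mem (measSet n) fun s hs => ?_)
    obtain ⟨h1, h2⟩ := hs
    have hsub : ∑ j ∈ Finset.univ.filter (fun j : Fin n => (j : ℕ) < m), s j ≤ ∑ i, s i :=
      Finset.sum_le_sum_of_subset_of_nonneg (Finset.filter_subset _ _) fun i _ _ => h1 i
    refine mul_nonneg (Finset.prod_nonneg fun i _ => rpow_nonneg (h1 i) _) (rpow_nonneg ?_ _)
    linarith
  · exact (measG n m x y).aestronglyMeasurable

lemma beta_eq (x b : ℝ) :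
    betaFn x b = (∫⁻ u in Set.Ioo (0:ℝ) 1,
      ENNReal.ofReal (u ^ (x-1) * (1-u) ^ (b-1))).toReal := by
  rw [betaFn, intervalIntegral.integral_of_le zero_le_one, integral_Ioc_eq_integral_Ioo]
  rw [integral_eq_lintegral_of_nonneg_ae]
  · exact ae_restrict_of_forall_mem measurableSet_Ioo fun u hu =>
      mul_nonneg (rpow_nonneg hu.1.le _) (rpow_nonneg (by linarith [hu.2]) _)
  · exact (((measurable_id.pow measurable_const)).mul
      ((measurable_const.sub measurable_id).pow measurable_const)).aestronglyMeasurable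

lemma lintegral_scale {N : ℕ} (g : (Fin N → ℝ) → ℝ≥0∞) (hg : Measurable g) {c : ℝ} (hc : 0 < c) :
    ∫⁻ t, g t = ENNReal.ofReal (c ^ N) * ∫⁻ w, g (c • w) := by
  have h1 : ∫⁻ w, g (c • w) = ∫⁻ t, g t ∂(Measure.map (c • ·) volume) :=
    (lintegral_map hg (measurable_const_smul c)).symm
  rw [h1, Measure.map_addHaar_smul (μ := volume) hc.ne', lintegral_smul_measure]
  rw [Module.finrank_fin_fun, smul_eq_mul, ← mul_assoc, abs_of_pos (inv_pos.mpr (pow_pos hc N)),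
    ← ENNReal.ofReal_mul (pow_nonneg hc.le N), mul_inv_cancel₀ (pow_pos hc N).ne', 
    ENNReal.ofReal_one, one_mul]

lemma measurable_cons {N : ℕ} :
    Measurable fun p : ℝ × (Fin N → ℝ) => (Fin.cons p.1 p.2 : Fin (N+1) → ℝ) := by
  rw [measurable_pi_iff]
  intro i
  refine Fin.cases ?_ (fun j => ?_) i
  · simpa using measurable_fst
  · simp only [Fin.cons_succ]
    exact (measurable_pi_apply j).comp measurable_snd

lemma cons_mem (N : ℕ) (u : ℝ) (t : Fin N → ℝ) :
    ((Fin.cons u t : Fin (N+1) → ℝ) ∈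
        {s : Fin (N+1) → ℝ | (∀ i, 0 ≤ s i) ∧ ∑ i, s i ≤ 1})
    ↔ ((0 ≤ u ∧ ∀ i, 0 ≤ t i) ∧ u + ∑ i, t i ≤ 1) := by
  simp [Set.mem_setOf_eq, Fin.forall_fin_succ, Fin.sum_univ_succ]

lemma cons_filter_sum (N k : ℕ) (u : ℝ) (t : Fin N → ℝ) :
    ∑ j ∈ Finset.univ.filter (fun j : Fin (N+1) => (j : ℕ) < k + 1),
        (Fin.cons u t : Fin (N+1) → ℝ) j
      = u + ∑ j ∈ Finset.univ.filter (fun j : Fin N => (j : ℕ) < k), t j := by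
  rw [Finset.sum_filter, Finset.sum_filter, Fin.sum_univ_succ]
  simp

lemma Fe_cons (N k : ℕ) (x y u : ℝ) (hu : 0 < u) (t : Fin N → ℝ) :
    Fe (N+1) (k+1) x y (Fin.cons u t)
      = ENNReal.ofReal (u ^ (x-1)) *
        Set.indicator {t : Fin N → ℝ | (∀ i, 0 ≤ t i) ∧ ∑ i, t i ≤ 1 - u}
          (fun t => ENNReal.ofReal ((∏ i, (t i) ^ (x-1)) *
            ((1-u) - ∑ j ∈ Finset.univ.filter (fun j : Fin N => (j : ℕ) < k), t j) ^ y)) t := by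
  unfold Fe
  by_cases h : t ∈ {t : Fin N → ℝ | (∀ i, 0 ≤ t i) ∧ ∑ i, t i ≤ 1 - u}
  · obtain ⟨ht1, ht2⟩ := h
    have h : t ∈ {t : Fin N → ℝ | (∀ i, 0 ≤ t i) ∧ ∑ i, t i ≤ 1 - u} := ⟨ht1, ht2⟩
    rw [Set.indicator_of_mem h, Set.indicator_of_mem
      ((cons_mem N u t).mpr ⟨⟨hu.le, ht1⟩, by linarith⟩)]
    rw [← ENNReal.ofReal_mul (rpow_nonneg hu.le _)]
    congr 1
    rw [Fin.prod_univ_succ]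
    simp only [Fin.cons_zero, Fin.cons_succ]
    rw [cons_filter_sum]
    have : 1 - (u + ∑ j ∈ Finset.univ.filter (fun j : Fin N => (j : ℕ) < k), t j)
        = (1-u) - ∑ j ∈ Finset.univ.filter (fun j : Fin N => (j : ℕ) < k), t j := by ring
    rw [this, mul_assoc]
  · rw [Set.indicator_of_notMem h, Set.indicator_of_notMem, mul_zero]
    intro hmem
    obtain ⟨⟨_, h1⟩, h2⟩ := (cons_mem N u t).mp hmem
    exact h ⟨h1, by linarith⟩

lemma indicator_smul_eval (N k : ℕ) (hk : k ≤ N) (x y c : ℝ) (hc : 0 < c) (hy : 0 ≤ y)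
    (w : Fin N → ℝ) :
    Set.indicator {t : Fin N → ℝ | (∀ i, 0 ≤ t i) ∧ ∑ i, t i ≤ c}
      (fun t => ENNReal.ofReal ((∏ i, (t i) ^ (x-1)) *
        (c - ∑ j ∈ Finset.univ.filter (fun j : Fin N => (j : ℕ) < k), t j) ^ y)) (c • w)
    = ENNReal.ofReal (c ^ ((N:ℝ) * (x-1) + y)) * Fe N k x y w := by
  have hmem : (c • w ∈ {t : Fin N → ℝ | (∀ i, 0 ≤ t i) ∧ ∑ i, t i ≤ c})
      ↔ w ∈ {s : Fin N → ℝ | (∀ i, 0 ≤ s i) ∧ ∑ i, s i ≤ 1} := by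
    simp only [Set.mem_setOf_eq, Pi.smul_apply, smul_eq_mul, ← Finset.mul_sum]
    constructor
    · rintro ⟨h1, h2⟩
      exact ⟨fun i => nonneg_of_mul_nonneg_right (h1 i) hc,
        (mul_le_iff_le_one_right hc).mp h2⟩
    · rintro ⟨h1, h2⟩
      exact ⟨fun i => mul_nonneg hc.le (h1 i), (mul_le_iff_le_one_right hc).mpr h2⟩
  unfold Fe
  by_cases h : w ∈ {s : Fin N → ℝ | (∀ i, 0 ≤ s i) ∧ ∑ i, s i ≤ 1}
  · rw [Set.indicator_of_mem (hmem.mpr h), Set.indicator_of_mem h,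
      ← ENNReal.ofReal_mul (rpow_nonneg hc.le _)]
    congr 1
    obtain ⟨h1, h2⟩ := h
    have hsub : ∑ j ∈ Finset.univ.filter (fun j : Fin N => (j : ℕ) < k), w j ≤ ∑ i, w i :=
      Finset.sum_le_sum_of_subset_of_nonneg (Finset.filter_subset _ _) fun i _ _ => h1 i
    have hA : (0:ℝ) ≤ 1 - ∑ j ∈ Finset.univ.filter (fun j : Fin N => (j : ℕ) < k), w j := by
      linarith
    have hprod : ∏ i, ((c • w) i) ^ (x-1) = c ^ ((N:ℝ)*(x-1)) * ∏ i, (w i) ^ (x-1) := by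
      simp only [Pi.smul_apply, smul_eq_mul]
      rw [Finset.prod_congr rfl (fun i _ => Real.mul_rpow hc.le (h1 i)),
        Finset.prod_mul_distrib, Finset.prod_const, Finset.card_univ, Fintype.card_fin,
        ← Real.rpow_natCast (c ^ (x-1)) N, ← Real.rpow_mul hc.le, mul_comm (x-1) (N:ℝ)]
    have hlast : c - ∑ j ∈ Finset.univ.filter (fun j : Fin N => (j : ℕ) < k), (c • w) j
        = c * (1 - ∑ j ∈ Finset.univ.filter (fun j : Fin N => (j : ℕ) < k), w j) := by
      simp only [Pi.smul_apply, smul_eq_mul, ← Finset.mul_sum]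
      ring
    rw [hprod, hlast, Real.mul_rpow hc.le hA, Real.rpow_add hc]
    ring
  · rw [Set.indicator_of_notMem (fun hc' => h (hmem.mp hc')), Set.indicator_of_notMem h,
      mul_zero]

lemma measInd (N k : ℕ) (x y c : ℝ) :
    Measurable (Set.indicator {t : Fin N → ℝ | (∀ i, 0 ≤ t i) ∧ ∑ i, t i ≤ c}
      (fun t => ENNReal.ofReal ((∏ i, (t i) ^ (x-1)) *
        (c - ∑ j ∈ Finset.univ.filter (fun j : Fin N => (j : ℕ) < k), t j) ^ y))) := by
  have hset : MeasurableSet {t : Fin N → ℝ | (∀ i, 0 ≤ t i) ∧ ∑ i, t i ≤ c} := by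
    have : {s : Fin N → ℝ | (∀ i, 0 ≤ s i) ∧ ∑ i, s i ≤ c}
        = (⋂ i, {s : Fin N → ℝ | 0 ≤ s i}) ∩ {s : Fin N → ℝ | ∑ i, s i ≤ c} := by
      ext s; simp [Set.mem_iInter]
    rw [this]
    exact (MeasurableSet.iInter fun i =>
        measurableSet_le measurable_const (measurable_pi_apply i)).inter
      (measurableSet_le (Finset.measurable_sum _ fun i _ => measurable_pi_apply i)
        measurable_const)
  refine Measurable.indicator ?_ hset
  refine ENNReal.measurable_ofReal.comp (Measurable.mul ?_ ?_)
  · exact Finset.measurable_prod _ fun i _ => (measurable_pi_apply i).pow measurable_const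
  · exact ((measurable_const.sub
      (Finset.measurable_sum _ fun i _ => measurable_pi_apply i))).pow measurable_const

lemma inner_eval (N k : ℕ) (hk : k ≤ N) (x y : ℝ) (hy : 0 ≤ y) {u : ℝ}
    (hu : u ∈ Set.Ioo (0:ℝ) 1) :
    ∫⁻ t : Fin N → ℝ, Fe (N+1) (k+1) x y (Fin.cons u t)
      = ENNReal.ofReal (u ^ (x-1) * (1-u) ^ ((N:ℝ)*x + y))
          * ∫⁻ t : Fin N → ℝ, Fe N k x y t := by
  obtain ⟨hu0, hu1⟩ := hu
  have hc : (0:ℝ) < 1 - u := by linarith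
  simp_rw [Fe_cons N k x y u hu0]
  rw [lintegral_const_mul _ (measInd N k x y (1-u))]
  rw [lintegral_scale _ (measInd N k x y (1-u)) hc]
  simp_rw [indicator_smul_eval N k hk x y (1-u) hc hy]
  rw [lintegral_const_mul _ (measFe N k x y), ← mul_assoc, ← mul_assoc]
  congr 1
  rw [← ENNReal.ofReal_mul (rpow_nonneg hu0.le _), ← ENNReal.ofReal_mul
    (mul_nonneg (rpow_nonneg hu0.le _) (pow_nonneg hc.le N))]
  congr 1
  rw [mul_assoc, ← Real.rpow_natCast (1-u) N, ← Real.rpow_add hc]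
  congr 2
  push_cast
  ring

lemma key (N k : ℕ) (hk : k ≤ N) (x y : ℝ) (hy : 0 ≤ y) :
    ∫⁻ s : Fin (N+1) → ℝ, Fe (N+1) (k+1) x y s
      = (∫⁻ u in Set.Ioo (0:ℝ) 1, ENNReal.ofReal (u^(x-1) * (1-u)^((N:ℝ)*x+y)))
          * ∫⁻ t : Fin N → ℝ, Fe N k x y t := by
  have hmp := (measurePreserving_piFinSuccAbove
    (fun _ : Fin (N+1) => (volume : Measure ℝ)) 0).symm
  have hstep : ∫⁻ s : Fin (N+1) → ℝ, Fe (N+1) (k+1) x y s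
      = ∫⁻ p : ℝ × (Fin N → ℝ), Fe (N+1) (k+1) x y (Fin.cons p.1 p.2)
          ∂((volume : Measure ℝ).prod (volume : Measure (Fin N → ℝ))) := by
    rw [volume_pi, ← hmp.lintegral_comp (measFe (N+1) (k+1) x y), volume_pi]
    congr 1
    ext p
    congr 1
    simp [MeasurableEquiv.piFinSuccAbove_symm_apply, Fin.insertNthEquiv, Fin.insertNth_zero]
  rw [hstep, lintegral_prod (fun p : ℝ × (Fin N → ℝ) => Fe (N+1) (k+1) x y (Fin.cons p.1 p.2))
    (((measFe (N+1) (k+1) x y).comp measurable_cons).aemeasurable)]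
  have h01 : (volume : Measure ℝ) ({0, 1} : Set ℝ) = 0 :=
    Set.Countable.measure_zero (by simp) _
  have hae : ∀ᵐ u : ℝ, (∫⁻ t : Fin N → ℝ, Fe (N+1) (k+1) x y (Fin.cons u t))
      = Set.indicator (Set.Ioo 0 1)
          (fun u => ENNReal.ofReal (u^(x-1) * (1-u)^((N:ℝ)*x+y))) u
        * ∫⁻ t : Fin N → ℝ, Fe N k x y t := by
    filter_upwards [compl_mem_ae_iff.mpr h01] with u hu
    by_cases h1 : u ∈ Set.Ioo (0:ℝ) 1
    · rw [inner_eval N k hk x y hy h1, Set.indicator_of_mem h1]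
    · rw [Set.indicator_of_notMem h1, zero_mul]
      have hne : u ≠ 0 ∧ u ≠ 1 := by
        simpa [not_or] using hu
      have hcase : u < 0 ∨ 1 < u := by
        simp only [Set.mem_Ioo, not_and_or, not_lt] at h1
        rcases h1 with h | h
        · exact Or.inl (lt_of_le_of_ne h hne.1)
        · exact Or.inr (lt_of_le_of_ne h (Ne.symm hne.2))
      have hz : ∀ t : Fin N → ℝ, Fe (N+1) (k+1) x y (Fin.cons u t) = 0 := by
        intro t
        rw [Fe, Set.indicator_of_notMem]
        intro hmem
        obtain ⟨⟨h0, ht⟩, hs⟩ := (cons_mem N u t).mp hmem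
        have hts : 0 ≤ ∑ i, t i := Finset.sum_nonneg fun i _ => ht i
        rcases hcase with h | h
        · linarith
        · linarith
      simp [hz]
  rw [lintegral_congr_ae hae]
  have hind : ∀ u : ℝ, Set.indicator (Set.Ioo (0:ℝ) 1)
        (fun u => ENNReal.ofReal (u^(x-1) * (1-u)^((N:ℝ)*x+y))) u
        * ∫⁻ t : Fin N → ℝ, Fe N k x y t
      = Set.indicator (Set.Ioo (0:ℝ) 1)
        (fun u => ENNReal.ofReal (u^(x-1) * (1-u)^((N:ℝ)*x+y))
          * ∫⁻ t : Fin N → ℝ, Fe N k x y t) u := by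
    intro u
    by_cases h : u ∈ Set.Ioo (0:ℝ) 1
    · rw [Set.indicator_of_mem h, Set.indicator_of_mem h]
    · rw [Set.indicator_of_notMem h, Set.indicator_of_notMem h, zero_mul]
  simp_rw [hind]
  rw [lintegral_indicator measurableSet_Ioo]
  exact lintegral_mul_const _ (((measurable_id.pow measurable_const)).mul
      ((measurable_const.sub measurable_id).pow measurable_const)).ennreal_ofReal

/-- Recursion `A(M, m, 1, x, y) = B(x, (M-1)x + y + 1) · A(M-1, m-1, 1, x, y)`. -/
theorem stmt6 (M m : ℕ) (hM : 2 ≤ M) (hm1 : 1 ≤ m) (hm : m ≤ M) (x y : ℝ)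
    (hx : 0 < x) (hy : 0 ≤ y) :
    simplexIntegral M m 1 x y
      = betaFn x (((M : ℝ) - 1) * x + y + 1) * simplexIntegral (M - 1) (m - 1) 1 x y := by
  obtain ⟨N, rfl⟩ : ∃ N, M = N + 1 := ⟨M - 1, (Nat.succ_pred_eq_of_pos (by omega)).symm⟩
  obtain ⟨k, rfl⟩ : ∃ k, m = k + 1 := ⟨m - 1, (Nat.succ_pred_eq_of_pos hm1).symm⟩
  have hk : k ≤ N := by omega
  simp only [Nat.add_sub_cancel]
  have hcast : ((N + 1 : ℕ) : ℝ) - 1 = (N : ℝ) := by push_cast; ring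
  rw [hcast, simplex_eq (N+1) (k+1) x y, simplex_eq N k x y, key N k hk x y hy,
    beta_eq x ((N:ℝ) * x + y + 1)]
  have h2 : (N:ℝ) * x + y + 1 - 1 = (N:ℝ) * x + y := by ring
  rw [h2, ENNReal.toReal_mul]
end

section
/- Let d ≥ 1, ρ ∈ (0,1], p ∈ [1,2), λ ∈ ℝ, and m ≥ 1. Then the integral ∫_{B_1^m} (∏_{i=1}^m |k_i|^{λ/p − 1/2} · |ρ/2 − |k_i||^{−1}) · 1[∑_{i=1}^m |k_i| ≤ ρ] dk_1 ⋯ dk_m diverges (equals +∞), provided λ/p − 1/2 > −d. -/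
open MeasureTheory Metric Module

private lemma aux_pow_sub (dd : ℕ) (hdd : 1 ≤ dd) {x y : ℝ} (hy : 0 ≤ y) (hxy : y ≤ x) :
    y ^ (dd - 1) * (x - y) ≤ x ^ dd - y ^ dd := by
  rw [← geom_sum₂_mul]
  refine mul_le_mul_of_nonneg_right ?_ (by linarith)
  have hx : (0:ℝ) ≤ x := hy.trans hxy
  have := Finset.single_le_sum (f := fun i => x ^ i * y ^ (dd - 1 - i))
    (fun i _ => by positivity) (Finset.mem_range.2 hdd)
  simpa using this

private lemma aux_rpow_min {a b x c : ℝ} (ha : 0 < a) (hax : a ≤ x) (hxb : x ≤ b) :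
    min (a ^ c) (b ^ c) ≤ x ^ c := by
  rcases le_or_gt 0 c with hc | hc
  · exact (min_le_left _ _).trans (Real.rpow_le_rpow ha.le hax hc)
  · exact (min_le_right _ _).trans (Real.rpow_le_rpow_of_nonpos (ha.trans_le hax) hxb hc.le)

private lemma aux_annulus (d : ℕ) (hd : 1 ≤ d) {a b : ℝ} (ha : 0 ≤ a) (hab : a ≤ b) :
    volume {x : EuclideanSpace ℝ (Fin d) | a ≤ ‖x‖ ∧ ‖x‖ < b}
      = ENNReal.ofReal (b ^ d - a ^ d) * volume (ball (0 : EuclideanSpace ℝ (Fin d)) 1) := by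
  have hfr : finrank ℝ (EuclideanSpace ℝ (Fin d)) = d := finrank_euclideanSpace_fin
  haveI : Nontrivial (EuclideanSpace ℝ (Fin d)) :=
    Module.nontrivial_of_finrank_pos (R := ℝ) (by rw [hfr]; omega)
  have hset : {x : EuclideanSpace ℝ (Fin d) | a ≤ ‖x‖ ∧ ‖x‖ < b}
      = ball (0 : EuclideanSpace ℝ (Fin d)) b \ ball 0 a := by
    ext x; simp [mem_ball_zero_iff, and_comm, not_lt]
  rw [hset, measure_diff (ball_subset_ball hab) measurableSet_ball.nullMeasurableSet
      measure_ball_lt_top.ne,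
    Measure.addHaar_ball volume _ ha, Measure.addHaar_ball volume _ (ha.trans hab), hfr,
    ENNReal.ofReal_sub _ (by positivity),
    ENNReal.sub_mul (fun _ _ => measure_ball_lt_top.ne)]

/-- For `p ∈ [1, 2)` the integral
`∫_{B_1^m} ∏_i ‖k_i‖^{λ/p - 1/2} |ρ/2 - ‖k_i‖|⁻¹ · 1[∑ ‖k_i‖ ≤ ρ] dk` diverges,
provided `λ/p - 1/2 > -d`. -/
theorem stmt10 (d m : ℕ) (hd : 1 ≤ d) (hm : 1 ≤ m) (ρ p lam : ℝ)
    (hρ0 : 0 < ρ) (hρ1 : ρ ≤ 1) (hp1 : 1 ≤ p) (hp2 : p < 2)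
    (hlam : lam / p - 1 / 2 > -(d : ℝ)) :
    (∫⁻ k : Fin m → EuclideanSpace ℝ (Fin d) in
        {k : Fin m → EuclideanSpace ℝ (Fin d) | ∀ i, ‖k i‖ ≤ 1},
      ENNReal.ofReal
        ((∏ i, ‖k i‖ ^ (lam / p - 1 / 2) * |ρ / 2 - ‖k i‖|⁻¹) *
          (if ∑ i, ‖k i‖ ≤ ρ then (1 : ℝ) else 0)))
      = ⊤ := by
  classical
  have hm0 : 0 < m := hm
  have hmR : (1:ℝ) ≤ (m:ℝ) := by exact_mod_cast hm
  set cex : ℝ := lam / p - 1 / 2 with hcex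
  set i₀ : Fin m := ⟨0, hm0⟩ with hi₀def
  -- radii of the shells accumulating at ρ/2
  set r : ℕ → ℝ := fun n => ρ / 2 - ρ / 4 * (1 / 2) ^ n with hrdef
  clear_value r
  have hr_lb : ∀ n, ρ / 4 ≤ r n := by
    intro n
    have h1 : ((1:ℝ)/2) ^ n ≤ 1 := pow_le_one₀ (by norm_num) (by norm_num)
    have h2 : ρ / 4 * (1/2:ℝ)^n ≤ ρ / 4 * 1 :=
      mul_le_mul_of_nonneg_left h1 (by linarith)
    simp only [hrdef]; linarith
  have hr_ub : ∀ n, r n < ρ / 2 := by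
    intro n
    have : (0:ℝ) < ρ/4 * (1/2)^n := by positivity
    simp only [hrdef]; linarith
  have hr_succ : ∀ n, r (n+1) - r n = ρ / 4 * (1/2)^(n+1) := by
    intro n
    simp only [hrdef]
    rw [pow_succ]
    ring
  have hr_mono : ∀ a b : ℕ, a ≤ b → r a ≤ r b := by
    intro a b hab
    have h1 : ((1:ℝ)/2)^b ≤ (1/2:ℝ)^a :=
      pow_le_pow_of_le_one (by norm_num) (by norm_num) hab
    have h2 := mul_le_mul_of_nonneg_left h1 (by linarith : (0:ℝ) ≤ ρ/4)
    simp only [hrdef]; linarith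
  have hr_lt : ∀ n, r n < r (n+1) := by
    intro n
    have h := hr_succ n
    have : (0:ℝ) < ρ/4 * (1/2)^(n+1) := by positivity
    linarith
  have hr0 : ∀ n, 0 ≤ r n := fun n => le_trans (by linarith) (hr_lb n)
  -- sets
  set A : ℕ → Set (EuclideanSpace ℝ (Fin d)) :=
    fun n => {x | r n ≤ ‖x‖ ∧ ‖x‖ < r (n+1)} with hAdef
  set B : Set (EuclideanSpace ℝ (Fin d)) :=
    {x | ρ/(8*m) ≤ ‖x‖ ∧ ‖x‖ < ρ/(4*m)} with hBdef
  set T : ℕ → Set (Fin m → EuclideanSpace ℝ (Fin d)) :=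
    fun n => Set.univ.pi fun i => if i = i₀ then A n else B with hTdef
  clear_value A B T
  -- constants
  set cα : ℝ := min ((ρ/4) ^ cex) ((ρ/2) ^ cex) with hcαdef
  set cβ : ℝ := min ((ρ/(8*m)) ^ cex) ((ρ/(4*m)) ^ cex) with hcβdef
  clear_value cα cβ
  have hcα : 0 < cα := by
    rw [hcαdef]
    exact lt_min (Real.rpow_pos_of_pos (by linarith) cex) (Real.rpow_pos_of_pos (by linarith) cex)
  have h8m : (0:ℝ) < ρ/(8*m) := by positivity
  have h4m : (0:ℝ) < ρ/(4*m) := by positivity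
  have hcβ : 0 < cβ := by
    rw [hcβdef]
    exact lt_min (Real.rpow_pos_of_pos h8m cex) (Real.rpow_pos_of_pos h4m cex)
  have h84 : ρ/(8*m) < ρ/(4*m) := by
    rw [div_lt_div_iff₀ (by positivity) (by positivity)]
    nlinarith
  have h4m4 : ρ/(4*m) ≤ ρ/4 := by
    rw [div_le_div_iff₀ (by positivity) (by norm_num)]
    nlinarith
  set V := volume (ball (0 : EuclideanSpace ℝ (Fin d)) 1) with hVdef
  set W := volume B with hWdef
  clear_value V W
  have hV0 : V ≠ 0 := by
    rw [hVdef]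
    exact (measure_ball_pos volume (0 : EuclideanSpace ℝ (Fin d)) one_pos).ne'
  have hW0 : W ≠ 0 := by
    rw [hWdef, hBdef, aux_annulus d hd h8m.le h84.le, ← hVdef]
    refine mul_ne_zero ?_ hV0
    rw [Ne, ENNReal.ofReal_eq_zero, not_le]
    have := pow_lt_pow_left₀ h84 h8m.le (show d ≠ 0 by omega)
    linarith
  -- measurability and membership facts
  have hmeasAB : ∀ a b : ℝ,
      MeasurableSet {x : EuclideanSpace ℝ (Fin d) | a ≤ ‖x‖ ∧ ‖x‖ < b} := fun a b =>
    measurable_norm (measurableSet_Ico : MeasurableSet (Set.Ico a b))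
  have hTmeas : ∀ n, MeasurableSet (T n) := by
    intro n
    rw [hTdef]
    refine MeasurableSet.univ_pi fun i => ?_
    by_cases h : i = i₀
    · rw [if_pos h, hAdef]; exact hmeasAB _ _
    · rw [if_neg h, hBdef]; exact hmeasAB _ _
  have hmemT : ∀ n (k : Fin m → EuclideanSpace ℝ (Fin d)), k ∈ T n →
      (r n ≤ ‖k i₀‖ ∧ ‖k i₀‖ < r (n+1)) ∧
        ∀ i, i ≠ i₀ → ρ/(8*m) ≤ ‖k i‖ ∧ ‖k i‖ < ρ/(4*m) := by
    intro n k hk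
    simp only [hTdef, Set.mem_univ_pi] at hk
    constructor
    · have := hk i₀
      rw [if_pos rfl] at this
      simpa [hAdef] using this
    · intro i hi
      have := hk i
      rw [if_neg hi] at this
      simpa [hBdef] using this
  have hTdisj : Pairwise (Function.onFun Disjoint T) := by
    intro n l hnl
    rw [Function.onFun, Set.disjoint_left]
    intro k hkn hkl
    obtain ⟨hn, -⟩ := hmemT n k hkn
    obtain ⟨hl, -⟩ := hmemT l k hkl
    rcases lt_or_gt_of_ne hnl with h | h
    · exact absurd (hn.2.trans_le ((hr_mono _ _ h).trans hl.1)) (lt_irrefl _)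
    · exact absurd (hl.2.trans_le ((hr_mono _ _ h).trans hn.1)) (lt_irrefl _)
  have hTsub : ∀ n, T n ⊆
      {k : Fin m → EuclideanSpace ℝ (Fin d) | ∀ i, ‖k i‖ ≤ 1} := by
    intro n k hk
    obtain ⟨hn, hB'⟩ := hmemT n k hk
    simp only [Set.mem_setOf_eq]
    intro i
    by_cases h : i = i₀
    · subst h
      have h1 := hn.2
      have h2 := hr_ub (n+1)
      linarith
    · have h1 := (hB' i h).2
      linarith
  -- pointwise lower bound on each shell
  have hpoint : ∀ n (k : Fin m → EuclideanSpace ℝ (Fin d)), k ∈ T n →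
      cα * (4/ρ * 2^n) * cβ^(m-1)
        ≤ (∏ i, ‖k i‖ ^ cex * |ρ/2 - ‖k i‖|⁻¹) *
            (if ∑ i, ‖k i‖ ≤ ρ then (1:ℝ) else 0) := by
    intro n k hk
    obtain ⟨⟨hA1, hA2⟩, hB'⟩ := hmemT n k hk
    have hsum : ∑ i, ‖k i‖ ≤ ρ := by
      have h2 : ∑ i ∈ Finset.univ.erase i₀, ‖k i‖ ≤ (Finset.univ.erase i₀).card • (ρ/(4*m)) :=
        Finset.sum_le_card_nsmul _ _ _
          (fun i hi => ((hB' i (Finset.ne_of_mem_erase hi)).2).le)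
      rw [Finset.card_erase_of_mem (Finset.mem_univ i₀), Finset.card_univ, Fintype.card_fin,
        nsmul_eq_mul] at h2
      have hcast : ((m - 1 : ℕ) : ℝ) ≤ (m : ℝ) := by
        exact_mod_cast Nat.sub_le m 1
      have h3 : ((m-1:ℕ):ℝ) * (ρ/(4*m)) ≤ (m:ℝ) * (ρ/(4*m)) :=
        mul_le_mul_of_nonneg_right hcast (by positivity)
      have hm0' : (m:ℝ) ≠ 0 := by positivity
      have h4 : (m:ℝ) * (ρ/(4*m)) = ρ/4 := by field_simp
      have h1 : ‖k i₀‖ ≤ ρ/2 := le_of_lt (hA2.trans (hr_ub _))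
      have h5 := (Finset.sum_erase_add Finset.univ (fun i => ‖k i‖) (Finset.mem_univ i₀)).symm
      rw [h5]
      have h6 : ∑ i ∈ Finset.univ.erase i₀, ‖k i‖ ≤ ρ/4 := by
        rw [h4] at h3; linarith
      linarith
    rw [if_pos hsum, mul_one]
    have hL : ∀ i : Fin m,
        (if i = i₀ then cα * (4/ρ * 2^n) else cβ) ≤ ‖k i‖ ^ cex * |ρ/2 - ‖k i‖|⁻¹ := by
      intro i
      by_cases h : i = i₀
      · subst h; rw [if_pos rfl]
        have hge : ρ/4 ≤ ‖k i₀‖ := (hr_lb n).trans hA1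
        have hlt : ‖k i₀‖ < ρ/2 := hA2.trans (hr_ub _)
        have hx1 : cα ≤ ‖k i₀‖ ^ cex := by
          rw [hcαdef]; exact aux_rpow_min (by linarith) hge hlt.le
        have hpos : 0 < ρ/2 - ‖k i₀‖ := by linarith
        have hub : ρ/2 - ‖k i₀‖ ≤ ρ/4 * (1/2)^n := by
          have hrn : r n = ρ/2 - ρ/4*(1/2:ℝ)^n := by simp only [hrdef]
          linarith
        have hinv : 4/ρ * 2^n ≤ |ρ/2 - ‖k i₀‖|⁻¹ := by
          rw [abs_of_pos hpos]
          have h1 : (ρ/4 * (1/2:ℝ)^n)⁻¹ ≤ (ρ/2 - ‖k i₀‖)⁻¹ := by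
            gcongr
          have h2 : (ρ/4 * (1/2:ℝ)^n)⁻¹ = 4/ρ * 2^n := by
            rw [mul_inv, inv_div, ← inv_pow]
            norm_num
          linarith
        exact mul_le_mul hx1 hinv (by positivity) (Real.rpow_nonneg (norm_nonneg _) _)
      · rw [if_neg h]
        have hge : ρ/(8*m) ≤ ‖k i‖ := (hB' i h).1
        have hlt : ‖k i‖ < ρ/(4*m) := (hB' i h).2
        have hx1 : cβ ≤ ‖k i‖ ^ cex := by
          rw [hcβdef]; exact aux_rpow_min h8m hge hlt.le
        have hpos : 0 < ρ/2 - ‖k i‖ := by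
          have : ‖k i‖ < ρ/4 := hlt.trans_le h4m4
          linarith
        have hinv : 1 ≤ |ρ/2 - ‖k i‖|⁻¹ := by
          rw [abs_of_pos hpos]
          rw [one_le_inv_iff₀]
          exact ⟨hpos, by linarith [norm_nonneg (k i)]⟩
        calc cβ = cβ * 1 := (mul_one _).symm
          _ ≤ ‖k i‖ ^ cex * |ρ/2 - ‖k i‖|⁻¹ :=
              mul_le_mul hx1 hinv zero_le_one (Real.rpow_nonneg (norm_nonneg _) _)
    have hprodL : ∏ i, (if i = i₀ then cα * (4/ρ*2^n) else cβ)
        = cα * (4/ρ*2^n) * cβ^(m-1) := by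
      rw [← Finset.prod_erase_mul _ _ (Finset.mem_univ i₀), if_pos rfl]
      rw [Finset.prod_congr rfl
          (fun i hi => if_neg (Finset.ne_of_mem_erase hi) :
            ∀ i ∈ Finset.univ.erase i₀,
              (if i = i₀ then cα * (4/ρ*2^n) else cβ) = cβ),
        Finset.prod_const, Finset.card_erase_of_mem (Finset.mem_univ i₀), Finset.card_univ,
        Fintype.card_fin, mul_comm]
    calc cα * (4/ρ*2^n) * cβ^(m-1)
        = ∏ i, (if i = i₀ then cα*(4/ρ*2^n) else cβ) := hprodL.symm
      _ ≤ ∏ i, ‖k i‖ ^ cex * |ρ/2 - ‖k i‖|⁻¹ := by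
          refine Finset.prod_le_prod (fun i _ => ?_) (fun i _ => hL i)
          by_cases h : i = i₀
          · rw [if_pos h]
            have : (0:ℝ) < 4/ρ * 2^n := by positivity
            exact (mul_pos hcα this).le
          · rw [if_neg h]; exact hcβ.le
  -- volume computations
  have hTvol : ∀ n, volume (T n) = volume (A n) * W^(m-1) := by
    intro n
    rw [hTdef]
    rw [volume_pi_pi]
    rw [← Finset.prod_erase_mul _ _ (Finset.mem_univ i₀), if_pos rfl]
    rw [Finset.prod_congr rfl
        (fun i hi => by rw [if_neg (Finset.ne_of_mem_erase hi)] :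
          ∀ i ∈ Finset.univ.erase i₀,
            volume (if i = i₀ then A n else B) = volume B),
      Finset.prod_const, Finset.card_erase_of_mem (Finset.mem_univ i₀), Finset.card_univ,
      Fintype.card_fin, mul_comm, ← hWdef]
  have hAvol : ∀ n,
      ENNReal.ofReal ((ρ/4)^(d-1) * (ρ/4 * (1/2)^(n+1))) * V ≤ volume (A n) := by
    intro n
    have heq : volume (A n) = ENNReal.ofReal (r (n+1)^d - r n ^ d) * V := by
      rw [hAdef]
      rw [aux_annulus d hd (hr0 n) (hr_lt n).le, ← hVdef]
    rw [heq]
    refine mul_le_mul_left (ENNReal.ofReal_le_ofReal ?_) V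
    calc (ρ/4)^(d-1) * (ρ/4 * (1/2)^(n+1))
        ≤ (r n)^(d-1) * (r (n+1) - r n) := by
          rw [hr_succ n]
          exact mul_le_mul_of_nonneg_right
            (pow_le_pow_left₀ (by linarith) (hr_lb n) _) (by positivity)
      _ ≤ r (n+1)^d - r n^d := aux_pow_sub d hd (hr0 n) (hr_lt n).le
  -- the common positive lower bound for each shell integral
  set ε : ENNReal :=
    ENNReal.ofReal (cα * (4/ρ) * cβ^(m-1) * ((ρ/4)^(d-1) * (ρ/8))) * (V * W^(m-1)) with hεdef
  clear_value ε
  have hε0 : ε ≠ 0 := by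
    rw [hεdef]
    refine mul_ne_zero ?_ (mul_ne_zero hV0 (pow_ne_zero _ hW0))
    rw [Ne, ENNReal.ofReal_eq_zero, not_le]
    have h1 : (0:ℝ) < 4/ρ := by positivity
    have h2 : (0:ℝ) < (ρ/4)^(d-1) * (ρ/8) :=
      mul_pos (pow_pos (by linarith) _) (by linarith)
    exact mul_pos (mul_pos (mul_pos hcα h1) (pow_pos hcβ _)) h2
  have hstep : ∀ n : ℕ, ε ≤ ∫⁻ k in T n,
      ENNReal.ofReal ((∏ i, ‖k i‖ ^ cex * |ρ / 2 - ‖k i‖|⁻¹) *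
        (if ∑ i, ‖k i‖ ≤ ρ then (1 : ℝ) else 0)) := by
    intro n
    have hcn_nonneg : (0:ℝ) ≤ cα * (4/ρ*2^n) * cβ^(m-1) := by
      have h1 : (0:ℝ) < 4/ρ * 2^n := by positivity
      exact (mul_pos (mul_pos hcα h1) (pow_pos hcβ _)).le
    have hmono : ∫⁻ _k in T n, ENNReal.ofReal (cα * (4/ρ*2^n) * cβ^(m-1))
        ≤ ∫⁻ k in T n,
          ENNReal.ofReal ((∏ i, ‖k i‖ ^ cex * |ρ / 2 - ‖k i‖|⁻¹) *
            (if ∑ i, ‖k i‖ ≤ ρ then (1 : ℝ) else 0)) :=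
      setLIntegral_mono' (hTmeas n)
        (fun k hk => ENNReal.ofReal_le_ofReal (hpoint n k hk))
    refine le_trans ?_ hmono
    rw [setLIntegral_const, hTvol n]
    have hre : cα * (4/ρ) * cβ^(m-1) * ((ρ/4)^(d-1) * (ρ/8))
        = (cα * (4/ρ*2^n) * cβ^(m-1)) * ((ρ/4)^(d-1) * (ρ/4 * (1/2)^(n+1))) := by
      have h1 : (2:ℝ)^n * (1/2:ℝ)^n = 1 := by rw [← mul_pow]; norm_num
      linear_combination (-(cα * (4/ρ) * cβ^(m-1) * (ρ/4)^(d-1) * (ρ/8))) * h1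
    calc ε = ENNReal.ofReal (cα*(4/ρ*2^n)*cβ^(m-1)) *
            ((ENNReal.ofReal ((ρ/4)^(d-1) * (ρ/4*(1/2)^(n+1))) * V) * W^(m-1)) := by
          rw [hεdef, hre, ENNReal.ofReal_mul hcn_nonneg]
          ring
      _ ≤ ENNReal.ofReal (cα*(4/ρ*2^n)*cβ^(m-1)) * (volume (A n) * W^(m-1)) := by
          gcongr
          exact hAvol n
  refine top_unique ?_
  calc (⊤:ENNReal) = ∑' _ : ℕ, ε := (ENNReal.tsum_const_eq_top_of_ne_zero hε0).symm
    _ ≤ ∑' n : ℕ, ∫⁻ k in T n,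
          ENNReal.ofReal ((∏ i, ‖k i‖ ^ cex * |ρ / 2 - ‖k i‖|⁻¹) *
            (if ∑ i, ‖k i‖ ≤ ρ then (1 : ℝ) else 0)) := ENNReal.tsum_le_tsum hstep
    _ = ∫⁻ k in ⋃ n, T n,
          ENNReal.ofReal ((∏ i, ‖k i‖ ^ cex * |ρ / 2 - ‖k i‖|⁻¹) *
            (if ∑ i, ‖k i‖ ≤ ρ then (1 : ℝ) else 0)) :=
        (lintegral_iUnion hTmeas hTdisj _).symm
    _ ≤ ∫⁻ k in {k : Fin m → EuclideanSpace ℝ (Fin d) | ∀ i, ‖k i‖ ≤ 1},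
          ENNReal.ofReal ((∏ i, ‖k i‖ ^ cex * |ρ / 2 - ‖k i‖|⁻¹) *
            (if ∑ i, ‖k i‖ ≤ ρ then (1 : ℝ) else 0)) :=
        lintegral_mono_set (Set.iUnion_subset hTsub)
end
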